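/- Let R be a local PID of characteristic zero and V a free R-module of finite rank acted on by an automorphism T of order p^h whose minimal polynomial has degree d with distinct roots λ_1,…,λ_d ∈ R. Then there is a basis of a rank-d free T-stable submodule V_1 ⊆ V with respect to which T acts by a lower bidiagonal matrix: diagonal entries λ_1,…,λ_d and subdiagonal entries a_1,…,a_{d−1} ∈ R. -/

import Mathlib

open Polynomial

section Aux

variable {R : Type*} [CommRing R] [IsDomain R] (K : Type*) [Field K] [Algebra R K]
  [IsFractionRing R K]
  {V : Type*} [AddCommGroup V] [Module R V] [Module.Free R V] [Module.Finite R V]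

/-- base change commutes with `aeval`. -/
lemma aux_baseChange_aeval (T : Module.End R V) (p : R[X]) :
    LinearMap.baseChange K (Polynomial.aeval T p) =
      Polynomial.aeval (LinearMap.baseChange K T) (p.map (algebraMap R K)) := by
  rw [aeval_map_algebraMap]
  exact (aeval_algHom_apply (Module.End.baseChangeHom R K V) T p).symm

/-- the natural map `V → K ⊗ V` is injective. -/
lemma aux_tmul_injective :
    Function.Injective (fun v : V => (1 : K) ⊗ₜ[R] v) := by
  have h1 : Function.Injective ((Algebra.linearMap R K).rTensor V) :=
    Module.Flat.rTensor_preserves_injective_linearMap _ (IsFractionRing.injective R K)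
  have h2 : (fun v : V => (1 : K) ⊗ₜ[R] v) =
      ((Algebra.linearMap R K).rTensor V) ∘ (TensorProduct.lid R V).symm := by
    funext v
    simp
  rw [h2]
  exact h1.comp (TensorProduct.lid R V).symm.injective

/-- denominator clearing in `K ⊗ V`. -/
lemma aux_clear_denom (w : TensorProduct R K V) :
    ∃ s : R, s ≠ 0 ∧ ∃ x : V, s • w = (1 : K) ⊗ₜ[R] x := by
  induction w using TensorProduct.induction_on with
  | zero => exact ⟨1, one_ne_zero, 0, by simp⟩
  | tmul k v =>
    obtain ⟨⟨r, s⟩, hrs⟩ := IsLocalization.surj (nonZeroDivisors R) k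
    refine ⟨(s : R), nonZeroDivisors.ne_zero s.2, r • v, ?_⟩
    rw [TensorProduct.smul_tmul', ← TensorProduct.smul_tmul]
    congr 1
    rw [Algebra.smul_def, mul_comm, hrs, Algebra.algebraMap_eq_smul_one]
  | add x y hx hy =>
    obtain ⟨s, hs, u, hu⟩ := hx
    obtain ⟨t, ht, v, hv⟩ := hy
    refine ⟨s * t, mul_ne_zero hs ht, t • u + s • v, ?_⟩
    rw [smul_add]
    have h1 : (s * t) • x = t • (s • x) := by rw [smul_smul, mul_comm]
    have h2 : (s * t) • y = s • (t • y) := by rw [smul_smul]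
    rw [h1, h2, hu, hv, TensorProduct.tmul_add, TensorProduct.tmul_smul,
      TensorProduct.tmul_smul]

end Aux

/-- Let `R` be a local PID of characteristic zero and `V` a free `R`-module of
finite rank acted on by an automorphism `T` of order `p^h` whose minimal polynomial has
degree `d` with distinct roots `λ_1,…,λ_d ∈ R` (which are `p^h`-th roots of unity). Then
there is a basis of a rank-`d` free `T`-stable submodule `V₁ ⊆ V` with respect to which `T`
acts by a lower bidiagonal matrix: diagonal entries `λ_1,…,λ_d` and subdiagonal entries
`a_1,…,a_{d−1} ∈ R`. -/
theorem stmt9 {R : Type*} [CommRing R] [IsDomain R] [IsPrincipalIdealRing R]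
    [IsLocalRing R] [CharZero R]
    {V : Type*} [AddCommGroup V] [Module R V] [Module.Free R V] [Module.Finite R V]
    (p h d : ℕ) (hp : p.Prime)
    (T : Module.End R V) (hT : T ^ (p ^ h) = 1)
    (lam : Fin d → R) (hdist : Function.Injective lam)
    (hroot : ∀ i, lam i ^ (p ^ h) = 1)
    (hmin : minpoly (FractionRing R) (LinearMap.baseChange (FractionRing R) (T : V →ₗ[R] V)) =
      ∏ i : Fin d, (X - C (algebraMap R (FractionRing R) (lam i)))) :
    ∃ (E : Fin d → V) (a : Fin d → R),
      LinearIndependent R E ∧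
      ∀ i : Fin d, T (E i) = lam i • E i +
        (if hlt : (i : ℕ) + 1 < d then a i • E ⟨(i : ℕ) + 1, hlt⟩ else 0) := by
  classical
  set K := FractionRing R with hK
  set TK := LinearMap.baseChange K (T : V →ₗ[R] V) with hTK
  have halg : Function.Injective (algebraMap R K) := IsFractionRing.injective R K
  set φ : V →ₗ[R] TensorProduct R K V := TensorProduct.mk R K V 1 with hφdef
  have hφ : ∀ v : V, φ v = (1 : K) ⊗ₜ[R] v := fun v => rfl
  have hφinj : Function.Injective φ := aux_tmul_injective K
  have hφsmul : ∀ (r : R) (v : TensorProduct R K V), r • v = algebraMap R K r • v :=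
    fun r v => (algebraMap_smul K r v).symm
  -- eigenvalues
  have hev : ∀ i : Fin d, Module.End.HasEigenvalue TK (algebraMap R K (lam i)) := by
    intro i
    apply Module.End.hasEigenvalue_of_isRoot
    rw [hmin]
    rw [IsRoot, eval_prod]
    apply Finset.prod_eq_zero (Finset.mem_univ i)
    simp
    exact sub_self _
  -- eigenvectors
  choose w hw using fun i => (hev i).exists_hasEigenvector
  -- clear denominators of the sum of the eigenvectors
  obtain ⟨s, hs, x, hx⟩ := aux_clear_denom K (∑ i : Fin d, w i)
  set w' : Fin d → TensorProduct R K V := fun i => algebraMap R K s • w i with hw'def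
  have hsK : algebraMap R K s ≠ 0 := fun hc => hs (halg (by rw [hc, map_zero]))
  have hw' : ∀ i, Module.End.HasEigenvector TK (algebraMap R K (lam i)) (w' i) := by
    intro i
    refine ⟨Submodule.smul_mem _ _ (hw i).1, ?_⟩
    exact smul_ne_zero hsK (hw i).2
  have hφx : φ x = ∑ i : Fin d, w' i := by
    rw [hφ, ← hx, Finset.smul_sum]
    exact Finset.sum_congr rfl fun i _ => hφsmul s (w i)
  -- the polynomials
  set lam' : ℕ → R := fun j => if hj : j < d then lam ⟨j, hj⟩ else 0 with hlam'def
  set q : ℕ → R[X] := fun n => ∏ j ∈ Finset.range n, (X - C (lam' j)) with hqdef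
  set E : Fin d → V := fun i => Polynomial.aeval T (q i) x with hEdef
  have hlam' : ∀ (j : ℕ) (hj : j < d), lam' j = lam ⟨j, hj⟩ := by
    intro j hj
    simp [hlam'def, hj]
  -- the key compatibility
  have hcomm : ∀ (pp : R[X]) (v : V),
      φ (Polynomial.aeval T pp v) =
        Polynomial.aeval TK (pp.map (algebraMap R K)) (φ v) := by
    intro pp v
    have h1 := aux_baseChange_aeval K T pp
    have h2 : LinearMap.baseChange K (Polynomial.aeval T pp) (φ v)
        = φ (Polynomial.aeval T pp v) := by
      rw [hφ, hφ, LinearMap.baseChange_tmul]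
    rw [← h2, h1]
  -- recurrence
  have hrec : ∀ i : Fin d,
      T (E i) = lam i • E i + Polynomial.aeval T (q ((i : ℕ) + 1)) x := by
    intro i
    have hq1 : q ((i : ℕ) + 1) = (X - C (lam i)) * q (i : ℕ) := by
      simp only [hqdef]
      rw [Finset.prod_range_succ, hlam' (i : ℕ) i.isLt, mul_comm]
    have hE2 : Polynomial.aeval T (q ((i : ℕ) + 1)) x
        = T (E i) - lam i • E i := by
      rw [hq1, map_mul, Module.End.mul_apply]
      rw [map_sub, aeval_X, aeval_C]
      rw [LinearMap.sub_apply]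
      congr 1
    rw [hE2]
    abel
  -- the top product kills x
  have hlast : Polynomial.aeval T (q d) x = 0 := by
    apply hφinj
    rw [map_zero, hcomm]
    have hqd : (q d).map (algebraMap R K) = minpoly K TK := by
      rw [hmin]
      calc (q d).map (algebraMap R K)
          = ∏ j ∈ Finset.range d, (X - C (algebraMap R K (lam' j))) := by
            simp only [hqdef]
            rw [Polynomial.map_prod]
            exact Finset.prod_congr rfl fun j _ => by
              rw [Polynomial.map_sub, Polynomial.map_X, Polynomial.map_C]
        _ = ∏ i : Fin d, (X - C (algebraMap R K (lam' (i : ℕ)))) :=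
            (Fin.prod_univ_eq_prod_range (fun j => X - C (algebraMap R K (lam' j))) d).symm
        _ = ∏ i : Fin d, (X - C (algebraMap R K (lam i))) :=
            Finset.prod_congr rfl fun i _ => by rw [hlam' (i : ℕ) i.isLt]
    rw [hqd, minpoly.aeval K TK]
    simp
  -- coefficients of E i in terms of eigenvectors
  set c : Fin d → Fin d → K := fun i k => algebraMap R K ((q i).eval (lam k)) with hcdef
  have hφE : ∀ i : Fin d, φ (E i) = ∑ k : Fin d, c i k • w' k := by
    intro i
    simp only [hEdef]
    rw [hcomm, hφx, map_sum]
    refine Finset.sum_congr rfl fun k _ => ?_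
    rw [Module.End.aeval_apply_of_hasEigenvector (hw' k)]
    congr 1
    simp only [hcdef]
    rw [eval_map, eval₂_hom]
  -- triangularity of c
  have hc0 : ∀ i k : Fin d, k < i → c i k = 0 := by
    intro i k hki
    have hq0 : (q (i : ℕ)).eval (lam k) = 0 := by
      simp only [hqdef]
      rw [eval_prod]
      apply Finset.prod_eq_zero (Finset.mem_range.mpr (show (k : ℕ) < (i : ℕ) from hki))
      rw [eval_sub, eval_X, eval_C, hlam' (k : ℕ) k.isLt, sub_self]
    simp only [hcdef, hq0, map_zero]
  have hcii : ∀ i : Fin d, c i i ≠ 0 := by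
    intro i hc
    simp only [hcdef] at hc
    have h0 : (q (i : ℕ)).eval (lam i) = 0 := halg (by rw [hc, map_zero])
    simp only [hqdef, eval_prod] at h0
    obtain ⟨j, hj, hj0⟩ := Finset.prod_eq_zero_iff.mp h0
    rw [Finset.mem_range] at hj
    have hjd : j < d := lt_trans hj i.isLt
    rw [eval_sub, eval_X, eval_C, hlam' j hjd, sub_eq_zero] at hj0
    have hij : i = ⟨j, hjd⟩ := hdist hj0
    rw [hij] at hj
    exact lt_irrefl j hj
  -- eigenvectors are linearly independent
  have hwli : LinearIndependent K w' :=
    Module.End.eigenvectors_linearIndependent' TK (fun i => algebraMap R K (lam i))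
      (fun i j hij => hdist (halg hij)) w' hw'
  -- linear independence of E
  have hEli : LinearIndependent R E := by
    rw [Fintype.linearIndependent_iff]
    intro g hg
    have h1 : φ (∑ i : Fin d, g i • E i) = 0 := by rw [hg, map_zero]
    rw [map_sum] at h1
    have h2 : ∀ i : Fin d, φ (g i • E i)
        = ∑ k : Fin d, (algebraMap R K (g i) * c i k) • w' k := by
      intro i
      rw [map_smul, hφsmul, hφE, Finset.smul_sum]
      refine Finset.sum_congr rfl fun k _ => ?_
      rw [smul_smul]
    simp only [h2] at h1
    rw [Finset.sum_comm] at h1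
    have h3 : ∑ k : Fin d, (∑ i : Fin d, algebraMap R K (g i) * c i k) • w' k = 0 := by
      rw [← h1]
      exact Finset.sum_congr rfl fun k _ => Finset.sum_smul
    have h4 : ∀ k : Fin d, ∑ i : Fin d, algebraMap R K (g i) * c i k = 0 :=
      Fintype.linearIndependent_iff.mp hwli _ h3
    have h5 : ∀ n : ℕ, ∀ k : Fin d, (k : ℕ) = n → algebraMap R K (g k) = 0 := by
      intro n
      induction n using Nat.strong_induction_on with
      | _ n IH =>
        intro k hk
        have h6 := h4 k
        rw [Finset.sum_eq_single k] at h6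
        · exact (mul_eq_zero.mp h6).resolve_right (hcii k)
        · intro b _ hbk
          rcases lt_or_gt_of_ne hbk with hlt | hgt
          · have hbn : (b : ℕ) < n := by
              have hbk' : (b : ℕ) < (k : ℕ) := hlt
              omega
            rw [IH (b : ℕ) hbn b rfl, zero_mul]
          · rw [hc0 b k hgt, mul_zero]
        · intro hk'
          exact absurd (Finset.mem_univ k) hk'
    intro i
    exact halg (by rw [h5 (i : ℕ) i rfl, map_zero])
  refine ⟨E, fun _ => 1, hEli, ?_⟩
  intro i
  rw [hrec i]
  congr 1
  by_cases hlt : (i : ℕ) + 1 < d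
  · rw [dif_pos hlt, one_smul]
  · rw [dif_neg hlt]
    have hd1 : (i : ℕ) + 1 = d := by omega
    rw [hd1, hlast]
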